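/- Let m ≥ 1 and M = 2^m. The number of bijective labelings L : {1,…,M} → GF(2)^m whose matrix is a reduced column echelon matrix equals M! / ∏_{l=1}^{m} (2^m − 2^{l−1}). -/

import Mathlib

open Submodule Function

/-- `p` is the pivot of column `l` of the labeling matrix `L`: it is the first
(smallest row index) nonzero entry of that column. -/
def IsPivot {m : ℕ} (L : Fin (2 ^ m) → Fin m → ZMod 2) (p : Fin (2 ^ m)) (l : Fin m) : Prop :=
  L p l ≠ 0 ∧ ∀ q, q < p → L q l = 0

/-- `L` (viewed as a `2^m × m` binary matrix) is a reduced column echelon matrix. -/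
def IsRCE {m : ℕ} (L : Fin (2 ^ m) → Fin m → ZMod 2) : Prop :=
  ∃ p : Fin m → Fin (2 ^ m),
    (∀ l, IsPivot L (p l) l) ∧
    (∀ l l' : Fin m, l' ≠ l → L (p l) l' = 0) ∧
    (∀ l l' : Fin m, (l' : ℕ) = (l : ℕ) + 1 → p l' < p l)

namespace Stmt4Aux

local notation "𝔽" => ZMod 2

lemma zmod2_eq_one {x : ZMod 2} (h : x ≠ 0) : x = 1 := by exact (by decide : ∀ y : ZMod 2, y ≠ 0 → y = 1) x h

variable {m : ℕ}

lemma single_eq_smul (k : Fin m) (c : 𝔽) :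
    Pi.single k c = c • (Pi.single k 1 : Fin m → 𝔽) := by
  ext j
  by_cases hj : j = k <;> simp [Pi.single_apply, hj]

/-- membership in span of standard basis vectors over S -/
lemma mem_span_single_iff (S : Set (Fin m)) (v : Fin m → 𝔽) :
    v ∈ span 𝔽 ((fun l => Pi.single l (1:𝔽)) '' S) ↔ ∀ l ∉ S, v l = 0 := by
  classical
  constructor
  · intro hv l hl
    have hker : span 𝔽 ((fun l => Pi.single l (1:𝔽)) '' S) ≤
        LinearMap.ker (LinearMap.proj (R := 𝔽) (φ := fun _ : Fin m => 𝔽) l) := by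
      rw [span_le]
      rintro _ ⟨k, hk, rfl⟩
      simp only [SetLike.mem_coe, LinearMap.mem_ker, LinearMap.proj_apply]
      exact Pi.single_eq_of_ne (by rintro rfl; exact hl hk) 1
    exact hker hv
  · intro hv
    have : v = ∑ k : Fin m, Pi.single k (v k) := (Finset.univ_sum_single v).symm
    rw [this]
    refine Submodule.sum_mem _ (fun k _ => ?_)
    by_cases hk : k ∈ S
    · rw [single_eq_smul]
      exact Submodule.smul_mem _ _ (subset_span ⟨k, hk, rfl⟩)
    · rw [hv k hk, Pi.single_zero]
      exact Submodule.zero_mem _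

/-- A pivot row of an RCE matrix is a standard basis vector. -/
lemma rce_row (L : Fin (2 ^ m) → Fin m → ZMod 2) (p : Fin m → Fin (2 ^ m))
    (hpiv : ∀ l, IsPivot L (p l) l) (hz : ∀ l l' : Fin m, l' ≠ l → L (p l) l' = 0) (l : Fin m) :
    L (p l) = Pi.single l 1 := by
  ext l'
  by_cases h : l' = l
  · subst h
    rw [Pi.single_eq_same]
    exact zmod2_eq_one (hpiv l').1
  · rw [hz l l' h, Pi.single_eq_of_ne h]

/-- adjacent-decreasing implies strictly antitone -/
lemma anti_of_adj {N : ℕ} (p : Fin m → Fin N)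
    (hadj : ∀ l l' : Fin m, (l' : ℕ) = (l : ℕ) + 1 → p l' < p l) :
    ∀ a b : Fin m, a < b → p b < p a := by
  have H : ∀ k : ℕ, ∀ a b : Fin m, (b : ℕ) = (a : ℕ) + k + 1 → p b < p a := by
    intro k
    induction k with
    | zero => intro a b hab; exact hadj a b hab
    | succ k IH =>
      intro a b hab
      have hc : (a : ℕ) + k + 1 < m := by have := b.isLt; omega
      set c : Fin m := ⟨(a : ℕ) + k + 1, hc⟩ with hcdef
      exact (hadj c b (by simp [hcdef]; omega)).trans (IH a c (by simp [hcdef]))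
  intro a b hab
  have : (b : ℕ) = (a : ℕ) + ((b : ℕ) - (a : ℕ) - 1) + 1 := by
    have := (Fin.lt_def).mp hab; omega
  exact H _ a b this

/-- Span of the first rows of an RCE matrix. -/
lemma rce_span (L : Fin (2 ^ m) → Fin m → ZMod 2) (p : Fin m → Fin (2 ^ m))
    (hpiv : ∀ l, IsPivot L (p l) l) (hz : ∀ l l' : Fin m, l' ≠ l → L (p l) l' = 0)
    (q : Fin (2 ^ m)) :
    span 𝔽 (L '' {r | r ≤ q}) =
      span 𝔽 ((fun l => Pi.single l (1:𝔽)) '' {l | p l ≤ q}) := by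
  apply le_antisymm
  · rw [span_le]
    rintro _ ⟨r, hr, rfl⟩
    refine SetLike.mem_coe.mpr ((mem_span_single_iff _ _).2 (fun l hl => ?_))
    exact (hpiv l).2 r (lt_of_le_of_lt hr (not_le.mp hl))
  · rw [span_le]
    rintro _ ⟨l, hl, rfl⟩
    exact Set.mem_of_eq_of_mem ((rce_row L p hpiv hz l).symm)
      (subset_span ⟨p l, hl, rfl⟩)

lemma finrank_span_single (P : Fin m → Prop) [DecidablePred P] :
    Module.finrank 𝔽 (span 𝔽 ((fun l => Pi.single l (1:𝔽)) '' {l | P l})) =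
      (Finset.univ.filter P).card := by
  have hli : LinearIndependent 𝔽 (fun s : {l // P l} => (Pi.basisFun 𝔽 (Fin m)) s.1) :=
    (Pi.basisFun 𝔽 (Fin m)).linearIndependent.comp Subtype.val Subtype.val_injective
  have hr : Set.range (fun s : {l // P l} => (Pi.basisFun 𝔽 (Fin m)) s.1) =
      (fun l => Pi.single l (1:𝔽)) '' {l | P l} := by
    ext x
    simp [Pi.basisFun_apply, Set.mem_image, Set.mem_range, Subtype.exists, eq_comm]
  rw [← hr, finrank_span_eq_card hli, Fintype.card_subtype]

lemma anti_count_iff {N : ℕ} (p : Fin m → Fin N)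
    (hp : ∀ a b : Fin m, a < b → p b < p a) (l : Fin m) (q : Fin N) :
    p l ≤ q ↔ m - (l : ℕ) ≤ (Finset.univ.filter (fun l' => p l' ≤ q)).card := by
  constructor
  · intro h
    have hsub : Finset.Ici l ⊆ Finset.univ.filter (fun l' => p l' ≤ q) := by
      intro l' hl'
      simp only [Finset.mem_filter, Finset.mem_univ, true_and]
      rcases eq_or_lt_of_le (Finset.mem_Ici.mp hl') with rfl | hlt
      · exact h
      · exact (hp l l' hlt).le.trans h
    calc m - (l : ℕ) = (Finset.Ici l).card := (Fin.card_Ici l).symm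
      _ ≤ _ := Finset.card_le_card hsub
  · intro h
    by_contra hc
    have hq : q < p l := not_le.mp hc
    have hsub : Finset.univ.filter (fun l' => p l' ≤ q) ⊆ Finset.Ioi l := by
      intro l' hl'
      simp only [Finset.mem_filter, Finset.mem_univ, true_and] at hl'
      rw [Finset.mem_Ioi]
      by_contra hll
      have : p l ≤ p l' := by
        rcases eq_or_lt_of_le (not_lt.mp hll) with rfl | hlt
        · exact le_refl _
        · exact (hp l' l hlt).le
      exact absurd (this.trans hl') (not_le.mpr hq)
    have hcard := Finset.card_le_card hsub
    rw [Fin.card_Ioi] at hcard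
    have := l.isLt
    omega

lemma anti_ext {N : ℕ} (p p' : Fin m → Fin N)
    (hp : ∀ a b : Fin m, a < b → p b < p a) (hp' : ∀ a b : Fin m, a < b → p' b < p' a)
    (hcount : ∀ q, (Finset.univ.filter (fun l' => p l' ≤ q)).card =
      (Finset.univ.filter (fun l' => p' l' ≤ q)).card) : p = p' := by
  funext l
  have key : ∀ q, p l ≤ q ↔ p' l ≤ q := by
    intro q
    rw [anti_count_iff p hp l q, anti_count_iff p' hp' l q, hcount q]
  exact le_antisymm ((key (p' l)).mpr (le_refl _)) ((key (p l)).mp (le_refl _))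

/-- Uniqueness: the identity is the only automorphism preserving RCE-ness. -/
lemma rce_unique (L : Fin (2 ^ m) → Fin m → ZMod 2) (hL : Function.Bijective L)
    (h1 : IsRCE L) (f : (Fin m → 𝔽) ≃ₗ[𝔽] (Fin m → 𝔽))
    (h2 : IsRCE (fun q => f (L q))) : f = LinearEquiv.refl 𝔽 _ := by
  classical
  obtain ⟨p, hpiv, hz, hadj⟩ := h1
  obtain ⟨p', hpiv', hz', hadj'⟩ := h2
  have hanti := anti_of_adj p hadj
  have hanti' := anti_of_adj p' hadj'
  have hcount : ∀ q, (Finset.univ.filter (fun l' => p l' ≤ q)).card =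
      (Finset.univ.filter (fun l' => p' l' ≤ q)).card := by
    intro q
    have e1 := rce_span L p hpiv hz q
    have e2 := rce_span (fun q => f (L q)) p' hpiv' hz' q
    have e3 : span 𝔽 ((fun q => f (L q)) '' {r | r ≤ q}) =
        Submodule.map f.toLinearMap (span 𝔽 (L '' {r | r ≤ q})) := by
      rw [Submodule.map_span]
      congr 1
      rw [show (fun q => f (L q)) = (⇑f ∘ L) from rfl, Set.image_comp]
      simp
    calc (Finset.univ.filter (fun l' => p l' ≤ q)).card
        = Module.finrank 𝔽 (span 𝔽 ((fun l => Pi.single l (1:𝔽)) '' {l | p l ≤ q})) :=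
          (finrank_span_single _).symm
      _ = Module.finrank 𝔽 (span 𝔽 (L '' {r | r ≤ q})) := by rw [e1]
      _ = Module.finrank 𝔽 (Submodule.map f.toLinearMap (span 𝔽 (L '' {r | r ≤ q}))) :=
          (LinearEquiv.finrank_map_eq f _).symm
      _ = Module.finrank 𝔽 (span 𝔽 ((fun l => Pi.single l (1:𝔽)) '' {l | p' l ≤ q})) := by
          rw [← e3, e2]
      _ = _ := finrank_span_single _
  have hpp' : p = p' := anti_ext p p' hanti hanti' hcount
  have hF : ∀ l, f (Pi.single l (1:𝔽)) = Pi.single l (1:𝔽) := by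
    intro l
    have e1 : L (p l) = Pi.single l 1 := rce_row L p hpiv hz l
    have e2 : f (L (p' l)) = Pi.single l 1 := rce_row (fun q => f (L q)) p' hpiv' hz' l
    have e1' : L (p' l) = Pi.single l 1 := by rw [← hpp']; exact e1
    conv_lhs => rw [← e1']
    exact e2
  apply LinearEquiv.toLinearMap_injective
  apply Module.Basis.ext (Pi.basisFun 𝔽 (Fin m))
  intro l
  simp [Pi.basisFun_apply, hF l]

/-- Existence of the RCE form. -/
lemma rce_exists (L : Fin (2 ^ m) → Fin m → ZMod 2) (hL : Function.Bijective L) :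
    ∃ f : (Fin m → 𝔽) ≃ₗ[𝔽] (Fin m → 𝔽), IsRCE (fun q => f (L q)) := by
  classical
  set J : Finset (Fin (2 ^ m)) :=
    Finset.univ.filter (fun q => L q ∉ span 𝔽 (L '' {r | r < q})) with hJdef
  have hJ_iff : ∀ q, q ∈ J ↔ L q ∉ span 𝔽 (L '' {r | r < q}) := by
    intro q; simp [hJdef]
  have hmem : ∀ q, L q ∈ span 𝔽 (L '' {r | r ∈ J ∧ r ≤ q}) := by
    have H : ∀ n : ℕ, ∀ q : Fin (2 ^ m), (q : ℕ) < n →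
        L q ∈ span 𝔽 (L '' {r | r ∈ J ∧ r ≤ q}) := by
      intro n
      induction n with
      | zero => intro q hq; omega
      | succ n IH =>
        intro q hq
        by_cases hqJ : q ∈ J
        · exact subset_span ⟨q, ⟨hqJ, le_refl _⟩, rfl⟩
        · have h0 : L q ∈ span 𝔽 (L '' {r | r < q}) := by
            by_contra hcon
            exact hqJ ((hJ_iff q).mpr hcon)
          have hle : span 𝔽 (L '' {r | r < q}) ≤ span 𝔽 (L '' {r | r ∈ J ∧ r ≤ q}) := by
            rw [span_le]
            rintro _ ⟨r, hr, rfl⟩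
            have hrq : (r : ℕ) < n := by
              have := (Fin.lt_def).mp hr; omega
            have hIH := IH r hrq
            refine span_mono (Set.image_mono (f := L) ?_) hIH
            intro s hs
            exact ⟨hs.1, hs.2.trans hr.le⟩
          exact hle h0
    intro q
    exact H ((q : ℕ) + 1) q (Nat.lt_succ_self _)
  have hspan_top : ⊤ ≤ span 𝔽 (Set.range (fun j : ↥J => L ↑j)) := by
    have hrg : Set.range (fun j : ↥J => L ↑j) = L '' ↑J := (Set.image_eq_range L ↑J).symm
    rw [hrg]
    intro v _
    obtain ⟨q, rfl⟩ := hL.2 v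
    exact span_mono (Set.image_mono (f := L) (fun s hs => Finset.mem_coe.mpr hs.1)) (hmem q)
  have hindep_set : ∀ T : Finset (Fin (2 ^ m)), T ⊆ J →
      LinearIndependent 𝔽 ((↑) : (L '' (↑T : Set (Fin (2 ^ m)))) → (Fin m → 𝔽)) := by
    intro T
    induction T using Finset.strongInductionOn with
    | _ T IH =>
      intro hTJ
      rcases T.eq_empty_or_nonempty with rfl | hne
      · have he : IsEmpty ↥(L '' ((∅ : Finset (Fin (2 ^ m))) : Set (Fin (2 ^ m)))) :=
          ⟨fun x => by simpa using x.2⟩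
        exact linearIndependent_empty_type
      · set t := T.max' hne with htdef
        have htT : t ∈ T := T.max'_mem hne
        have hsub : (L '' (↑(T.erase t) : Set (Fin (2 ^ m)))) ⊆ L '' {r | r < t} := by
          apply Set.image_mono
          intro s hs
          rw [Finset.mem_coe, Finset.mem_erase] at hs
          exact lt_of_le_of_ne (T.le_max' s hs.2) hs.1
        have htJ : t ∈ J := hTJ htT
        have hnotsp : L t ∉ span 𝔽 (L '' (↑(T.erase t) : Set (Fin (2 ^ m)))) := by
          intro h
          exact ((hJ_iff t).mp htJ) (span_mono hsub h)
        have hnotmem : L t ∉ L '' (↑(T.erase t) : Set (Fin (2 ^ m))) :=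
          fun h => hnotsp (subset_span h)
        have himg : L '' (↑T : Set (Fin (2 ^ m))) =
            insert (L t) (L '' (↑(T.erase t) : Set (Fin (2 ^ m)))) := by
          rw [← Set.image_insert_eq, ← Finset.coe_insert, Finset.insert_erase htT]
        rw [himg]
        exact (linearIndepOn_id_insert hnotmem).2
          ⟨IH (T.erase t) (Finset.erase_ssubset htT) ((Finset.erase_subset _ _).trans hTJ),
            hnotsp⟩
  have hindep : LinearIndependent 𝔽 (fun j : ↥J => L ↑j) := by
    have h0 := hindep_set J (subset_refl J)
    exact h0.comp
      (fun j : ↥J => (⟨L ↑j, Set.mem_image_of_mem L (Finset.mem_coe.mpr j.2)⟩ :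
        (L '' (↑J : Set (Fin (2 ^ m))))))
      (fun a b hab => Subtype.ext (hL.1 (congrArg Subtype.val hab)))
  let b : Module.Basis ↥J 𝔽 (Fin m → 𝔽) := Module.Basis.mk hindep hspan_top
  have hb : ∀ j : ↥J, b j = L ↑j := fun j => by simp [b, Module.Basis.coe_mk]
  have hcard : J.card = m := by
    have h1 := Module.finrank_eq_card_basis b
    rw [Module.finrank_fintype_fun_eq_card, Fintype.card_fin, Fintype.card_coe] at h1
    exact h1.symm
  let ι := J.orderIsoOfFin hcard
  let p : Fin m → Fin (2 ^ m) := fun l => ↑(ι l.rev)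
  let e : ↥J ≃ Fin m := ι.toEquiv.symm.trans Fin.revPerm
  let f := b.equiv (Pi.basisFun 𝔽 (Fin m)) e
  have key : ∀ l, f (L (p l)) = Pi.single l (1:𝔽) := by
    intro l
    have h1 : L (p l) = b (ι l.rev) := (hb (ι l.rev)).symm
    rw [h1]
    show (b.equiv (Pi.basisFun 𝔽 (Fin m)) e) (b (ι l.rev)) = _
    rw [Module.Basis.equiv_apply]
    have he : e (ι l.rev) = l := by
      simp [e, Fin.rev_rev]
    rw [he, Pi.basisFun_apply]
  have habove : ∀ (l : Fin m) (q : Fin (2 ^ m)), q < p l → f (L q) l = 0 := by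
    intro l q hq
    have hgen : ∀ x ∈ L '' {r | r ∈ J ∧ r ≤ q},
        ((LinearMap.proj (R := 𝔽) (φ := fun _ : Fin m => 𝔽) l).comp f.toLinearMap) x = 0 := by
      rintro _ ⟨r, ⟨hrJ, hrq⟩, rfl⟩
      have hbr : L r = b ⟨r, hrJ⟩ := (hb ⟨r, hrJ⟩).symm
      simp only [LinearMap.comp_apply, LinearEquiv.coe_coe, LinearMap.proj_apply]
      rw [hbr]
      show (b.equiv (Pi.basisFun 𝔽 (Fin m)) e) (b ⟨r, hrJ⟩) l = 0
      rw [Module.Basis.equiv_apply, Pi.basisFun_apply]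
      refine Pi.single_eq_of_ne ?_ 1
      intro hcontr
      have h3 : (e ⟨r, hrJ⟩).rev = l.rev := congrArg Fin.rev hcontr.symm
      simp only [e, Equiv.trans_apply, Fin.revPerm_apply, Fin.rev_rev] at h3
      have h4 : (⟨r, hrJ⟩ : ↥J) = ι l.rev := by
        rw [← h3]
        simp
      have hrp : r = p l := congrArg Subtype.val h4
      rw [hrp] at hrq
      exact absurd hrq (not_le.mpr hq)
    have hker : span 𝔽 (L '' {r | r ∈ J ∧ r ≤ q}) ≤
        LinearMap.ker ((LinearMap.proj (R := 𝔽) (φ := fun _ : Fin m => 𝔽) l).comp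
          f.toLinearMap) := by
      rw [span_le]
      intro x hx
      exact LinearMap.mem_ker.mpr (hgen x hx)
    have := hker (hmem q)
    simpa using this
  have hanti : ∀ a bb : Fin m, a < bb → p bb < p a := by
    intro a bb hab
    have : bb.rev < a.rev := Fin.rev_lt_rev.mpr hab
    have := ι.strictMono this
    exact Subtype.coe_lt_coe.mpr this
  refine ⟨f, p, ?_, ?_, ?_⟩
  · intro l
    constructor
    · rw [show (fun q => f (L q)) (p l) = f (L (p l)) from rfl, key l]
      simp
    · intro q hq
      exact habove l q hq
  · intro l l' hll'
    rw [show (fun q => f (L q)) (p l) = f (L (p l)) from rfl, key l]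
    exact Pi.single_eq_of_ne hll' 1
  · intro l l' h
    exact hanti l l' (by rw [Fin.lt_def]; omega)

end Stmt4Aux

open Stmt4Aux in
/-- The number of bijective labelings of order `m` whose matrix is a
reduced column echelon matrix equals `M! / ∏_{l=1}^{m} (2^m − 2^{l−1})` with `M = 2^m`. -/
theorem stmt_4 (m : ℕ) (hm : 1 ≤ m) :
    Nat.card {L : Fin (2 ^ m) → Fin m → ZMod 2 // Function.Bijective L ∧ IsRCE L} =
      Nat.factorial (2 ^ m) / ∏ l ∈ Finset.range m, (2 ^ m - 2 ^ l) := by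
  classical
  let T := {L : Fin (2 ^ m) → Fin m → ZMod 2 // Function.Bijective L ∧ IsRCE L}
  let B := {L : Fin (2 ^ m) → Fin m → ZMod 2 // Function.Bijective L}
  let G := (Fin m → ZMod 2) ≃ₗ[ZMod 2] (Fin m → ZMod 2)
  let Φ : G × T → B := fun fL =>
    ⟨fun q => fL.1 (fL.2.1 q), fL.1.bijective.comp fL.2.2.1⟩
  have hΦ : Function.Bijective Φ := by
    constructor
    · rintro ⟨f, L, hLb, hLr⟩ ⟨g, L', hLb', hLr'⟩ h
      have hfun : (fun q => f (L q)) = (fun q => g (L' q)) := congrArg Subtype.val h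
      have hφL : (fun q => (f.trans g.symm) (L q)) = L' := by
        funext q
        have hq := congrFun hfun q
        simp only [LinearEquiv.trans_apply, hq]
        exact g.symm_apply_apply _
      have hrce : IsRCE (fun q => (f.trans g.symm) (L q)) := by rw [hφL]; exact hLr'
      have hid : f.trans g.symm = LinearEquiv.refl (ZMod 2) _ :=
        rce_unique L hLb hLr (f.trans g.symm) hrce
      have hfg : f = g := by
        have hgf : ∀ x, g.symm (f x) = x := fun x => by
          have := congrArg (fun (ψ : G) => ψ x) hid
          exact this
        refine LinearEquiv.ext fun x => ?_
        calc f x = g (g.symm (f x)) := (g.apply_symm_apply _).symm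
          _ = g x := by rw [hgf x]
      have hLL : L = L' := by
        funext q
        have hq := congrFun hfun q
        rw [hfg] at hq
        exact g.injective hq
      subst hfg
      exact congrArg (fun t => (f, t)) (Subtype.ext hLL)
    · rintro ⟨L, hL⟩
      obtain ⟨f, hf⟩ := rce_exists L hL
      refine ⟨⟨f.symm, ⟨fun q => f (L q), f.bijective.comp hL, hf⟩⟩, ?_⟩
      apply Subtype.ext
      funext q
      exact f.symm_apply_apply (L q)
  have hcardB : Nat.card B = Nat.factorial (2 ^ m) := by
    have e : B ≃ (Fin (2 ^ m) ≃ (Fin m → ZMod 2)) :=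
      { toFun := fun L => Equiv.ofBijective L.1 L.2
        invFun := fun e => ⟨e, e.bijective⟩
        left_inv := fun L => rfl
        right_inv := fun e => Equiv.ext fun x => rfl }
    have e0 : Fin (2 ^ m) ≃ (Fin m → ZMod 2) :=
      Fintype.equivOfCardEq (by simp [Fintype.card_fun])
    rw [Nat.card_congr e, Nat.card_eq_fintype_card, Fintype.card_equiv e0, Fintype.card_fin]
  have hcardG : Nat.card G = ∏ l ∈ Finset.range m, (2 ^ m - 2 ^ l) := by
    have e1 : GL (Fin m) (ZMod 2) ≃* G :=
      (Matrix.GeneralLinearGroup.toLin (n := Fin m) (R := ZMod 2)).trans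
        (LinearMap.GeneralLinearGroup.generalLinearEquiv (ZMod 2) (Fin m → ZMod 2))
    rw [← Nat.card_congr e1.toEquiv, Matrix.card_GL_field]
    simp only [ZMod.card]
    exact Fin.prod_univ_eq_prod_range (fun i => 2 ^ m - 2 ^ i) m
  have hP : 0 < ∏ l ∈ Finset.range m, (2 ^ m - 2 ^ l) := by
    apply Finset.prod_pos
    intro l hl
    have : 2 ^ l < 2 ^ m := Nat.pow_lt_pow_right one_lt_two (Finset.mem_range.mp hl)
    omega
  have hmain : Nat.factorial (2 ^ m) =
      Nat.card T * ∏ l ∈ Finset.range m, (2 ^ m - 2 ^ l) := by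
    rw [← hcardB, ← Nat.card_congr (Equiv.ofBijective Φ hΦ), Nat.card_prod, hcardG, mul_comm]
  exact (Nat.div_eq_of_eq_mul_left hP hmain).symm
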